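/- Let C be an m×n Cauchon diagram, let (x,y) be any square of the grid, and let (x_1,y_1),...,(x_t,y_t) be the chain rooted at (x,y) (with t = 0 if the chain is empty). Then the image of {1,...,m} under the composite permutation v_{x,y} ∘ w_{x,y}^{-1} equals the set ({1,...,m} \ {x_1,...,x_t}) ∪ {y_1,...,y_t}. -/

import Mathlib

/-- The transposition `s_{a+b-m-1} = (a+b-m-1, a+b-m)` assigned to the grid square `(a,b)`. -/
def sqPerm (m : ℕ) (p : ℕ × ℕ) : Equiv.Perm ℕ :=
  Equiv.swap (p.1 + p.2 - m - 1) (p.1 + p.2 - m)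

/-- The reading word of the set of grid squares satisfying `P`: rows are read from the
top (`a = m`) down to the bottom (`a = 1`), and within each row columns are read from the
left (`b = m+1`) to the right (`b = m+n`); factors are multiplied so that the last factor
in reading order is applied first. -/
def readingWord (m n : ℕ) (P : ℕ × ℕ → Bool) : Equiv.Perm ℕ :=
  ((List.range m).map fun i =>
    (((List.range n).map fun j =>
      if P (m - i, m + 1 + j) then sqPerm m (m - i, m + 1 + j) else 1)).prod).prod

/-- `(a,b)` is a square of the `m × n` grid: `1 ≤ a ≤ m`, `m+1 ≤ b ≤ m+n`. -/
def InGrid (m n : ℕ) (p : ℕ × ℕ) : Prop :=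
  1 ≤ p.1 ∧ p.1 ≤ m ∧ m + 1 ≤ p.2 ∧ p.2 ≤ m + n

/-- A colouring (`true` = black, `false` = white) is a Cauchon diagram if for every black
square `(a,b)`, either every square `(a,b')` with `b' < b` is black, or every square
`(a',b)` with `a' > a` is black. -/
def IsCauchon (m n : ℕ) (col : ℕ × ℕ → Bool) : Prop :=
  ∀ a b, InGrid m n (a, b) → col (a, b) = true →
    (∀ b', m + 1 ≤ b' → b' < b → col (a, b') = true) ∨
    (∀ a', a < a' → a' ≤ m → col (a', b) = true)

/-- The permutation associated to a colouring: the reading word of its set of black squares. -/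
def assocPerm (m n : ℕ) (col : ℕ × ℕ → Bool) : Equiv.Perm ℕ :=
  readingWord m n col

/-- `v_{x,y}`: the reading word of the black squares `(a,b)` with `a ≥ x` and `b ≤ y`. -/
def vAt (m n : ℕ) (col : ℕ × ℕ → Bool) (x y : ℕ) : Equiv.Perm ℕ :=
  readingWord m n fun p => col p && decide (x ≤ p.1) && decide (p.2 ≤ y)

/-- `w_{x,y}`: the reading word of all grid squares `(a,b)` with `a ≥ x` and `b ≤ y`. -/
def wAt (m n x y : ℕ) : Equiv.Perm ℕ :=
  readingWord m n fun p => decide (x ≤ p.1) && decide (p.2 ≤ y)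

/-- Box `k` on the south-east border: `(1, m+k)` if `k ≤ n`, and `(k-n+1, m+n)` otherwise. -/
def boxSE (m n k : ℕ) : ℕ × ℕ :=
  if k ≤ n then (1, m + k) else (k - n + 1, m + n)

/-- `(X 1, Y 1), ..., (X t, Y t)` is the chain rooted at the square `(x,y)` of the colouring
`col` (with `t = 0` for the empty chain). -/
def IsChainRootedAt (m n : ℕ) (col : ℕ × ℕ → Bool) (x y : ℕ)
    (t : ℕ) (X Y : ℕ → ℕ) : Prop :=
  -- every member of the chain is a white square of the grid
  (∀ i, 1 ≤ i → i ≤ t → InGrid m n (X i, Y i) ∧ col (X i, Y i) = false) ∧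
  -- if `(x,y)` is white, the chain starts at `(x,y)`
  (col (x, y) = false → 1 ≤ t ∧ X 1 = x ∧ Y 1 = y) ∧
  -- if `(x,y)` is black and the chain is nonempty, it starts at the white square
  -- weakly north-west of `(x,y)` nearest to it
  (col (x, y) = true → 1 ≤ t →
    x ≤ X 1 ∧ Y 1 ≤ y ∧
      ∀ a b, InGrid m n (a, b) → col (a, b) = false → x ≤ a → b ≤ y →
        X 1 ≤ a ∧ b ≤ Y 1) ∧
  -- the chain is empty only when there is no white square weakly north-west of `(x,y)`
  (t = 0 → ∀ a b, InGrid m n (a, b) → col (a, b) = false → x ≤ a → b ≤ y → False) ∧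
  -- inductive step: each next member is the nearest white square strictly north-west
  (∀ i, 1 ≤ i → i < t →
    X i < X (i + 1) ∧ Y (i + 1) < Y i ∧
      ∀ a b, InGrid m n (a, b) → col (a, b) = false → X i < a → b < Y i →
        X (i + 1) ≤ a ∧ b ≤ Y (i + 1)) ∧
  -- termination: no white square strictly north-west of the last member
  (1 ≤ t → ∀ a b, InGrid m n (a, b) → col (a, b) = false → X t < a → b < Y t → False)


namespace ChainAux

/-- conditional adjacent transposition -/
def swapIf (b : Bool) (k : ℕ) : Equiv.Perm ℕ := if b then Equiv.swap k (k+1) else 1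

lemma swapIf_lt {u k : ℕ} (b : Bool) (h : u < k) : swapIf b k u = u := by
  cases b <;> simp [swapIf]
  exact Equiv.swap_apply_of_ne_of_ne (by omega) (by omega)

lemma swapIf_gt {u k : ℕ} (b : Bool) (h : k + 1 < u) : swapIf b k u = u := by
  cases b <;> simp [swapIf]
  exact Equiv.swap_apply_of_ne_of_ne (by omega) (by omega)

lemma swapIf_left (b : Bool) (k : ℕ) : swapIf b k k = if b then k+1 else k := by
  cases b <;> simp [swapIf]

lemma swapIf_right (b : Bool) (k : ℕ) : swapIf b k (k+1) = if b then k else k+1 := by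
  cases b <;> simp [swapIf]

lemma swapIf_false (k : ℕ) : swapIf false k = 1 := rfl

lemma swapIf_true (k : ℕ) : swapIf true k = Equiv.swap k (k+1) := rfl

/-- the word of conditional adjacent swaps at positions `k0, k0+1, ..., k0+len-1`,
with the factor at position `k0+len-1` (the rightmost) applied first. -/
def fword (k0 : ℕ) (q : ℕ → Bool) : ℕ → Equiv.Perm ℕ
  | 0 => 1
  | len+1 => fword k0 q len * swapIf (q len) (k0+len)

lemma fword_succ_apply (k0 : ℕ) (q : ℕ → Bool) (len u : ℕ) :
    fword k0 q (len+1) u = fword k0 q len (swapIf (q len) (k0+len) u) := by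
  simp [fword, Equiv.Perm.mul_apply]

lemma fword_lt {k0 len u : ℕ} (q : ℕ → Bool) (h : u < k0) : fword k0 q len u = u := by
  induction len with
  | zero => rfl
  | succ len ih => rw [fword_succ_apply, swapIf_lt _ (by omega), ih]

lemma fword_gt {k0 len u : ℕ} (q : ℕ → Bool) (h : k0 + len < u) : fword k0 q len u = u := by
  induction len with
  | zero => rfl
  | succ len ih => rw [fword_succ_apply, swapIf_gt _ (by omega), ih (by omega)]

lemma fword_mem' {k0 : ℕ} (q : ℕ → Bool) (len : ℕ) : ∀ u, k0 ≤ u → u ≤ k0 + len →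
    k0 ≤ fword k0 q len u ∧ fword k0 q len u ≤ k0 + len := by
  induction len with
  | zero => intro u h1 h2
            simp [fword]; omega
  | succ len ih =>
    intro u h1 h2
    rw [fword_succ_apply]
    rcases Nat.lt_or_ge u (k0 + len) with h | h
    · rw [swapIf_lt _ h]
      have := ih u h1 (by omega)
      omega
    · have h2' : u = k0 + len ∨ u = k0 + len + 1 := by omega
      cases hq : q len
      · rw [swapIf_false]
        simp only [Equiv.Perm.one_apply]
        rcases h2' with h3 | h3
        · have := ih u h1 (by omega)
          omega
        · rw [h3, fword_gt q (by omega)]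
          omega
      · rw [swapIf_true]
        rcases h2' with h3 | h3
        · rw [h3, Equiv.swap_apply_left, fword_gt q (by omega)]
          omega
        · rw [h3, Equiv.swap_apply_right]
          have := ih (k0+len) (by omega) (by omega)
          omega

lemma fword_mem {k0 len u : ℕ} (q : ℕ → Bool) (h1 : k0 ≤ u) (h2 : u ≤ k0 + len) :
    k0 ≤ fword k0 q len u ∧ fword k0 q len u ≤ k0 + len :=
  fword_mem' q len u h1 h2

lemma fword_trim {k0 len c : ℕ} {q : ℕ → Bool} (hc : c ≤ len)
    (h : ∀ j, c ≤ j → j < len → q j = false) : fword k0 q len = fword k0 q c := by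
  induction len with
  | zero => have hc0 : c = 0 := by omega
            rw [hc0]
  | succ len ih =>
    rcases Nat.eq_or_lt_of_le hc with h' | h'
    · rw [h']
    · have hq : q len = false := h len (by omega) (by omega)
      show fword k0 q len * swapIf (q len) (k0+len) = _
      rw [hq, swapIf_false, mul_one]
      exact ih (by omega) (fun j hj1 hj2 => h j hj1 (by omega))

lemma fword_slide {k0 len j0 : ℕ} {q : ℕ → Bool} (hj : j0 ≤ len)
    (h : ∀ j, j0 ≤ j → j < len → q j = true) :
    fword k0 q len (k0 + len) = fword k0 q j0 (k0 + j0) := by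
  induction len with
  | zero => have hj0 : j0 = 0 := by omega
            rw [hj0]
  | succ len ih =>
    rcases Nat.eq_or_lt_of_le hj with h' | h'
    · rw [h']
    · rw [fword_succ_apply]
      have hq : q len = true := h len (by omega) (by omega)
      rw [hq, show k0 + (len+1) = (k0+len)+1 from rfl, swapIf_right, if_pos rfl]
      exact ih (by omega) (fun j hj1 hj2 => h j hj1 (by omega))

lemma fword_base {k0 len : ℕ} (q : ℕ → Bool) (h : 1 ≤ len) :
    fword k0 q len k0 = if q 0 then k0 + 1 else k0 := by
  induction len with
  | zero => omega
  | succ len ih =>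
    rcases Nat.eq_zero_or_pos len with h' | h'
    · subst h'
      rw [fword_succ_apply]
      simp only [Nat.add_zero]
      rw [swapIf_left]
      cases hq : q 0
      · simp only [Bool.false_eq_true, if_false]
        rfl
      · simp only [if_pos rfl]
        show fword k0 q 0 (k0+1) = k0 + 1
        rfl
    · rw [fword_succ_apply, swapIf_lt _ (by omega), ih h']

lemma fword_congr {k0 len : ℕ} {q q' : ℕ → Bool} (h : ∀ j, j < len → q j = q' j) :
    fword k0 q len = fword k0 q' len := by
  induction len with
  | zero => rfl
  | succ len ih =>
    show fword k0 q len * swapIf (q len) (k0+len) = fword k0 q' len * swapIf (q' len) (k0+len)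
    rw [h len (by omega), ih (fun j hj => h j (by omega))]

lemma fword_split {k0 c1 len : ℕ} (q : ℕ → Bool) (hc : c1 ≤ len) :
    fword k0 q len = fword k0 q c1 * fword (k0 + c1) (fun j => q (j + c1)) (len - c1) := by
  induction len with
  | zero => have hc0 : c1 = 0 := by omega
            subst hc0
            simp [fword]
  | succ len ih =>
    rcases Nat.eq_or_lt_of_le hc with h' | h'
    · rw [← h', Nat.sub_self]
      show _ = fword k0 q c1 * 1
      rw [mul_one]
    · have hlen : len + 1 - c1 = (len - c1) + 1 := by omega
      rw [hlen]
      show fword k0 q len * swapIf (q len) (k0+len) = _ *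
        (fword (k0+c1) _ (len - c1) * swapIf ((fun j => q (j + c1)) (len - c1)) ((k0+c1)+(len-c1)))
      rw [ih (by omega)]
      have e1 : len - c1 + c1 = len := by omega
      have e2 : k0 + c1 + (len - c1) = k0 + len := by omega
      simp only [e1, e2, mul_assoc]

lemma fword_commute {k1 len1 k2 len2 : ℕ} (q1 q2 : ℕ → Bool) (h : k1 + len1 < k2) :
    Commute (fword k1 q1 len1) (fword k2 q2 len2) := by
  apply Equiv.ext
  intro u
  simp only [Equiv.Perm.mul_apply]
  rcases Nat.lt_or_ge u k2 with hu | hu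
  · have e2 : fword k2 q2 len2 u = u := fword_lt q2 hu
    rw [e2]
    rcases Nat.lt_or_ge u k1 with a | a
    · rw [fword_lt q1 a, e2]
    · rcases le_or_gt u (k1+len1) with b | b
      · have := fword_mem q1 a b
        rw [fword_lt q2 (by omega)]
      · rw [fword_gt q1 b, e2]
  · have e1 : fword k1 q1 len1 u = fword k1 q1 len1 u := rfl
    have e1' : fword k1 q1 len1 u = u := fword_gt q1 (by omega)
    rw [e1']
    rcases le_or_gt u (k2+len2) with b | b
    · have := fword_mem q2 hu b
      rw [fword_gt q1 (by omega)]
    · rw [fword_gt q2 b, e1']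

/-- product of `g (lo+k-1) * ... * g (lo+1) * g lo`; the factor `g lo` is applied first. -/
def prodR (g : ℕ → Equiv.Perm ℕ) : ℕ → ℕ → Equiv.Perm ℕ
  | _, 0 => 1
  | lo, k+1 => prodR g (lo+1) k * g lo

lemma prodR_succ_apply (g : ℕ → Equiv.Perm ℕ) (lo k u : ℕ) :
    prodR g lo (k+1) u = prodR g (lo+1) k (g lo u) := by
  simp [prodR, Equiv.Perm.mul_apply]

lemma prodR_congr {g g' : ℕ → Equiv.Perm ℕ} {lo k : ℕ}
    (h : ∀ a, lo ≤ a → a < lo + k → g a = g' a) : prodR g lo k = prodR g' lo k := by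
  induction k generalizing lo with
  | zero => rfl
  | succ k ih =>
    show prodR g (lo+1) k * g lo = prodR g' (lo+1) k * g' lo
    rw [h lo (le_refl _) (by omega), ih (fun a h1 h2 => h a (by omega) (by omega))]

lemma prodR_one {g : ℕ → Equiv.Perm ℕ} {lo k : ℕ}
    (h : ∀ a, lo ≤ a → a < lo + k → g a = 1) : prodR g lo k = 1 := by
  induction k generalizing lo with
  | zero => rfl
  | succ k ih =>
    show prodR g (lo+1) k * g lo = 1
    rw [h lo (le_refl _) (by omega), mul_one]
    exact ih (fun a h1 h2 => h a (by omega) (by omega))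

lemma prodR_split (g : ℕ → Equiv.Perm ℕ) (lo k1 k2 : ℕ) :
    prodR g lo (k1 + k2) = prodR g (lo + k2) k1 * prodR g lo k2 := by
  induction k2 generalizing lo with
  | zero => simp [prodR]
  | succ k2 ih =>
    show prodR g lo ((k1 + k2)+1) = _
    show prodR g (lo+1) (k1+k2) * g lo = _
    rw [ih (lo+1)]
    show prodR g (lo + 1 + k2) k1 * prodR g (lo+1) k2 * g lo =
      prodR g (lo + (k2+1)) k1 * (prodR g (lo+1) k2 * g lo)
    rw [show lo + 1 + k2 = lo + (k2+1) from by omega, mul_assoc]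

lemma prodR_commute {g : ℕ → Equiv.Perm ℕ} {lo k : ℕ} {z : Equiv.Perm ℕ}
    (h : ∀ a, lo ≤ a → a < lo + k → Commute (g a) z) : Commute (prodR g lo k) z := by
  induction k generalizing lo with
  | zero => exact Commute.one_left z
  | succ k ih =>
    show Commute (prodR g (lo+1) k * g lo) z
    exact Commute.mul_left (ih (fun a h1 h2 => h a (by omega) (by omega)))
      (h lo (le_refl _) (by omega))

lemma prodR_mul {f h : ℕ → Equiv.Perm ℕ} {lo k : ℕ}
    (hc : ∀ a a', lo ≤ a' → a' < a → a < lo + k → Commute (h a) (f a')) :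
    prodR (fun a => f a * h a) lo k = prodR f lo k * prodR h lo k := by
  induction k generalizing lo with
  | zero => simp [prodR]
  | succ k ih =>
    show prodR (fun a => f a * h a) (lo+1) k * (f lo * h lo) = _
    rw [ih (fun a a' h1 h2 h3 => hc a a' (by omega) h2 (by omega))]
    show prodR f (lo+1) k * prodR h (lo+1) k * (f lo * h lo) =
      prodR f (lo+1) k * f lo * (prodR h (lo+1) k * h lo)
    have hcm : Commute (prodR h (lo+1) k) (f lo) :=
      prodR_commute (fun a h1 h2 => hc a lo (le_refl _) (by omega) (by omega))
    rw [mul_assoc, mul_assoc, ← mul_assoc (prodR h (lo+1) k), hcm.eq, mul_assoc]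

lemma prodR_fix_low {g : ℕ → Equiv.Perm ℕ} {lo k off u : ℕ}
    (hg : ∀ a, lo ≤ a → a < lo + k → ∀ v, v < a + off → g a v = v)
    (hu : u < lo + off) : prodR g lo k u = u := by
  induction k generalizing lo with
  | zero => rfl
  | succ k ih =>
    rw [prodR_succ_apply, hg lo (le_refl _) (by omega) u hu]
    exact ih (fun a h1 h2 v hv => hg a (by omega) (by omega) v hv) (by omega)

lemma prodR_fix_high {g : ℕ → Equiv.Perm ℕ} {lo k off u : ℕ}
    (hg : ∀ a, lo ≤ a → a < lo + k → ∀ v, a + off < v → g a v = v)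
    (hu : lo + k + off ≤ u) : prodR g lo k u = u := by
  induction k generalizing lo with
  | zero => rfl
  | succ k ih =>
    rw [prodR_succ_apply, hg lo (le_refl _) (by omega) u (by omega)]
    exact ih (fun a h1 h2 v hv => hg a (by omega) (by omega) v hv) (by omega)

lemma prodR_maps {g : ℕ → Equiv.Perm ℕ} {lo k A B u : ℕ}
    (hg : ∀ a, lo ≤ a → a < lo + k → ∀ v, A ≤ v → v ≤ B → A ≤ g a v ∧ g a v ≤ B)
    (h1 : A ≤ u) (h2 : u ≤ B) :
    A ≤ prodR g lo k u ∧ prodR g lo k u ≤ B := by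
  induction k generalizing lo u with
  | zero => exact ⟨h1, h2⟩
  | succ k ih =>
    rw [prodR_succ_apply]
    have := hg lo (le_refl _) (by omega) u h1 h2
    exact ih (fun a ha1 ha2 => hg a (by omega) (by omega)) this.1 this.2

lemma sqPerm_eq (m a j : ℕ) : sqPerm m (a, m+1+j) = Equiv.swap (a+j) (a+j+1) := by
  show Equiv.swap ((a, m+1+j).1 + (a, m+1+j).2 - m - 1) ((a, m+1+j).1 + (a, m+1+j).2 - m) = _
  rw [show (a, m+1+j).1 + (a, m+1+j).2 - m - 1 = a + j from by simp; omega,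
    show (a, m+1+j).1 + (a, m+1+j).2 - m = a + j + 1 from by simp; omega]

lemma row_eq (m n : ℕ) (P : ℕ × ℕ → Bool) (a : ℕ) :
    (((List.range n).map fun j =>
      if P (a, m + 1 + j) then sqPerm m (a, m + 1 + j) else 1)).prod
      = fword a (fun j => P (a, m+1+j)) n := by
  induction n with
  | zero => rfl
  | succ n ih =>
    rw [List.range_succ, List.map_append, List.prod_append, ih]
    show _ = fword a _ n * swapIf (P (a, m+1+n)) (a+n)
    congr 1
    simp only [List.map_cons, List.map_nil, List.prod_cons, List.prod_nil, mul_one]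
    cases h : P (a, m+1+n)
    · simp [swapIf]
    · simp only [if_pos rfl, swapIf, sqPerm_eq]

lemma range_desc_prod (m : ℕ) (g : ℕ → Equiv.Perm ℕ) :
    ∀ k, k ≤ m → ((List.range k).map (fun i => g (m - i))).prod = prodR g (m + 1 - k) k := by
  intro k
  induction k with
  | zero => intro _; rfl
  | succ k ih =>
    intro hk
    rw [List.range_succ, List.map_append, List.prod_append, ih (by omega)]
    simp only [List.map_cons, List.map_nil, List.prod_cons, List.prod_nil, mul_one]
    have e : m + 1 - (k+1) = m - k := by omega
    have e2 : m + 1 - k = (m - k) + 1 := by omega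
    rw [e, e2]
    rfl

lemma readingWord_eq (m n : ℕ) (P : ℕ × ℕ → Bool) :
    readingWord m n P = prodR (fun a => fword a (fun j => P (a, m+1+j)) n) 1 m := by
  unfold readingWord
  simp only [row_eq m n P]
  have := range_desc_prod m (fun a => fword a (fun j => P (a, m+1+j)) n) m (le_refl m)
  rw [this, show m + 1 - m = 1 from by omega]

def runEnd (γ : ℕ → Bool) : ℕ → ℕ → ℕ
  | z, 0 => z
  | z, k+1 => if γ (z+1) then runEnd γ (z+1) k else z

lemma runIdentity (γ : ℕ → Bool) (m : ℕ) : ∀ k z, z + k = m →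
    insert (runEnd γ z k)
      ((Finset.Icc (z+1) m).image (fun a => if γ a then a - 1 else runEnd γ a (m - a)))
      = Finset.Icc z m := by
  intro k
  induction k with
  | zero =>
    intro z hz
    have h0 : Finset.Icc (z+1) m = ∅ := by
      rw [Finset.Icc_eq_empty]; omega
    rw [h0, Finset.image_empty, show runEnd γ z 0 = z from rfl,
      show z = m from by omega, Finset.Icc_self]
    rfl
  | succ k ih =>
    intro z hz
    have hIcc : Finset.Icc (z+1) m = insert (z+1) (Finset.Icc ((z+1)+1) m) := by
      ext u
      simp only [Finset.mem_Icc, Finset.mem_insert]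
      omega
    rw [hIcc, Finset.image_insert]
    have hrec := ih (z+1) (by omega)
    cases hγ : γ (z+1)
    · have h1 : runEnd γ z (k+1) = z := by simp [runEnd, hγ]
      have h2 : (if (false : Bool) = true then (z+1) - 1 else runEnd γ (z+1) (m - (z+1))) =
          runEnd γ (z+1) k := by
        simp only [Bool.false_eq_true, if_false]
        congr 1
        omega
      rw [h1, h2, hrec]
      ext u
      simp only [Finset.mem_Icc, Finset.mem_insert]
      omega
    · have h1 : runEnd γ z (k+1) = runEnd γ (z+1) k := by simp [runEnd, hγ]
      have h2 : (if (true : Bool) = true then (z+1) - 1 else runEnd γ (z+1) (m - (z+1))) = z := by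
        simp
      rw [h1, h2, Finset.insert_comm, hrec]
      ext u
      simp only [Finset.mem_Icc, Finset.mem_insert]
      omega


lemma prodR_ride {e L : ℕ} (hL : 1 ≤ L) (γ : ℕ → Bool) (p : ℕ → ℕ → Bool)
    (hp0 : ∀ a, p a 0 = γ a) :
    ∀ k a1, prodR (fun a => fword (a + e) (p a) L) (a1 + 1) k (a1 + 1 + e)
      = runEnd γ a1 k + 1 + e := by
  intro k
  induction k with
  | zero => intro a1; rfl
  | succ k ih =>
    intro a1
    rw [prodR_succ_apply]
    have hbase := fword_base (k0 := (a1+1)+e) (p (a1+1)) hL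
    rw [hp0] at hbase
    cases hγ : γ (a1+1)
    · rw [hγ] at hbase
      simp at hbase
      rw [show a1 + 1 + e = (a1+1) + e from rfl, hbase]
      rw [prodR_fix_low (off := e)
        (fun a h1 h2 v hv => fword_lt _ (by omega)) (by omega)]
      simp [runEnd, hγ]
    · rw [hγ] at hbase
      simp at hbase
      rw [show a1 + 1 + e = (a1+1) + e from rfl, hbase,
        show (a1+1)+e+1 = ((a1+1)+1)+e from by omega, ih (a1+1)]
      simp [runEnd, hγ]

lemma prodR_rows_fix_high {q : ℕ → ℕ → Bool} {N c lo k u : ℕ} (hcN : c ≤ N)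
    (hq : ∀ a, lo ≤ a → a < lo + k → ∀ j, c ≤ j → j < N → q a j = false)
    (hu : lo + k + c ≤ u) : prodR (fun a => fword a (q a) N) lo k u = u :=
  prodR_fix_high (off := c) (fun a h1 h2 v hv => by
    rw [fword_trim hcN (hq a h1 h2)]
    exact fword_gt _ hv) hu

lemma prodR_black {q : ℕ → ℕ → Bool} {N c : ℕ} (hcN : c ≤ N) :
    ∀ {k lo u : ℕ},
    (∀ a, lo ≤ a → a < lo + k →
      (∀ j, j < c → q a j = true) ∧ (∀ j, c ≤ j → j < N → q a j = false)) →
    lo + c ≤ u →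
    prodR (fun a => fword a (q a) N) lo k u = if u < lo + k + c then u - c else u := by
  intro k
  induction k with
  | zero =>
    intro lo u hq hu
    rw [if_neg (by omega)]
    rfl
  | succ k ih =>
    intro lo u hq hu
    rw [prodR_succ_apply]
    have htrim : fword lo (q lo) N = fword lo (q lo) c :=
      fword_trim hcN (fun j h1 h2 => (hq lo (le_refl _) (by omega)).2 j h1 h2)
    rcases Nat.eq_or_lt_of_le hu with he | hlt
    · have e1 : (fword lo (q lo) N) u = lo := by
        rw [htrim, ← he, fword_slide (j0 := 0) (by omega)
          (fun j h1 h2 => (hq lo (le_refl _) (by omega)).1 j h2)]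
        rfl
      rw [e1, prodR_fix_low (off := 0)
        (fun a h1 h2 v hv => fword_lt _ (by omega)) (by omega), if_pos (by omega)]
      omega
    · have e1 : (fword lo (q lo) N) u = u := by
        rw [htrim]
        exact fword_gt _ (by omega)
      rw [e1, ih (fun a h1 h2 => hq a (by omega) (by omega)) (by omega)]
      rw [show lo + 1 + k + c = lo + (k+1) + c from by omega]


lemma fword_one_apply (k0 : ℕ) (q : ℕ → Bool) (u : ℕ) :
    fword k0 q 1 u = swapIf (q 0) k0 u := by
  show (fword k0 q 0 * swapIf (q 0) (k0+0)) u = _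
  simp [fword, Equiv.Perm.mul_apply]

lemma fword_hookstep {k0 len : ℕ} {q : ℕ → Bool} (hlen : 1 ≤ len)
    (h : ∀ j, 1 ≤ j → j < len → q j = true) :
    fword k0 q len (k0 + len) = if q 0 then k0 else k0 + 1 := by
  rw [fword_slide (j0 := 1) hlen h, fword_one_apply, swapIf_right]

lemma prodR_single (g : ℕ → Equiv.Perm ℕ) (lo : ℕ) : prodR g lo 1 = g lo := one_mul _

lemma image_Icc_succ (X : ℕ → ℕ) (t : ℕ) :
    Finset.image X (Finset.Icc 1 (t+1))
      = insert (X 1) (Finset.image (fun i => X (i+1)) (Finset.Icc 1 t)) := by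
  ext u
  simp only [Finset.mem_image, Finset.mem_Icc, Finset.mem_insert]
  constructor
  · rintro ⟨i, ⟨hi1, hi2⟩, rfl⟩
    rcases Nat.eq_or_lt_of_le hi1 with h | h
    · left; rw [← h]
    · right
      refine ⟨i - 1, ⟨by omega, by omega⟩, ?_⟩
      rw [show i - 1 + 1 = i from by omega]
  · rintro (h | ⟨i, ⟨hi1, hi2⟩, rfl⟩)
    · exact ⟨1, ⟨le_refl _, by omega⟩, h.symm⟩
    · exact ⟨i+1, ⟨by omega, by omega⟩, rfl⟩

theorem core (m n : ℕ) (col : ℕ × ℕ → Bool) :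
    ∀ (t : ℕ), ∀ (x y : ℕ) (X Y : ℕ → ℕ),
    1 ≤ x → x ≤ m + 1 → m ≤ y → y ≤ m + n →
    (∀ i, 1 ≤ i → i ≤ t → X i ≤ m ∧ m + 1 ≤ Y i ∧ col (X i, Y i) = false) →
    (1 ≤ t → x ≤ X 1 ∧ Y 1 ≤ y) →
    (∀ i, 1 ≤ i → i < t → X i < X (i+1) ∧ Y (i+1) < Y i) →
    (∀ a b, x ≤ a → a ≤ m → m + 1 ≤ b → b ≤ y → col (a, b) = false →
        1 ≤ t ∧ X 1 ≤ a ∧ b ≤ Y 1) →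
    (∀ i, 1 ≤ i → i < t → ∀ a b, X i < a → a ≤ m → m + 1 ≤ b → b < Y i →
        col (a, b) = false → X (i+1) ≤ a ∧ b ≤ Y (i+1)) →
    (1 ≤ t → ∀ a b, X t < a → a ≤ m → m + 1 ≤ b → b < Y t → col (a, b) = false → False) →
    Finset.image (⇑(vAt m n col x y)) (Finset.Icc 1 (x-1) ∪ Finset.Icc (x + (y - m)) y)
      = (Finset.Icc 1 m \ Finset.image X (Finset.Icc 1 t)) ∪ Finset.image Y (Finset.Icc 1 t) := by
  intro t
  induction t with
  | zero =>
    intro x y X Y hx1 hxm1 hmy hyn hXm hfirst hmono hdom0 hdom hterm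
    set c := y - m with hc
    have hcn : c ≤ n := by omega
    set q : ℕ → ℕ → Bool :=
      fun a j => col (a, m+1+j) && decide (x ≤ a) && decide (m+1+j ≤ y) with hq_def
    set g : ℕ → Equiv.Perm ℕ := fun a => fword a (q a) n with hg_def
    have hveq : vAt m n col x y = prodR g 1 m := readingWord_eq m n _
    have hblack : ∀ a j, x ≤ a → a ≤ m → j < c → col (a, m+1+j) = true := by
      intro a j h1 h2 hj
      by_contra hw
      have hw' : col (a, m+1+j) = false := by
        revert hw; cases col (a, m+1+j) <;> simp
      have := hdom0 a (m+1+j) h1 h2 (by omega) (by omega) hw'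
      omega
    have hq : ∀ a, x ≤ a → a < x + (m+1-x) →
        (∀ j, j < c → q a j = true) ∧ (∀ j, c ≤ j → j < n → q a j = false) := by
      intro a ha1 ha2
      constructor
      · intro j hj
        have h1 : col (a, m+1+j) = true := hblack a j ha1 (by omega) hj
        have h3 : m+1+j ≤ y := by omega
        simp [hq_def, h1, ha1, h3]
      · intro j hj1 hj2
        have h3 : ¬ (m+1+j ≤ y) := by omega
        simp [hq_def, h3]
    have hs1 := prodR_split g 1 (m+1-x) (x-1)
    rw [show (m+1-x)+(x-1) = m from by omega, show 1 + (x-1) = x from by omega] at hs1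
    have hbot : prodR g 1 (x-1) = 1 := by
      apply prodR_one
      intro a h1 h2
      show fword a (q a) n = 1
      rw [fword_trim (c := 0) (by omega) (fun j hj1 hj2 => by
        have h3 : ¬ (x ≤ a) := by omega
        simp [hq_def, h3])]
      rfl
    have hpt1 : ∀ u, u ∈ Finset.Icc 1 (x-1) → vAt m n col x y u = u := by
      intro u hu
      rw [Finset.mem_Icc] at hu
      rw [hveq, hs1, hbot, mul_one]
      exact prodR_fix_low (off := 0) (fun a h1 h2 v hv => fword_lt _ (by omega)) (by omega)
    have hpt2 : ∀ u, u ∈ Finset.Icc (x+c) y → vAt m n col x y u = u - c := by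
      intro u hu
      rw [Finset.mem_Icc] at hu
      rw [hveq, hs1, hbot, mul_one]
      rw [prodR_black hcn hq (by omega), if_pos (by omega)]
    have him1 : Finset.image (⇑(vAt m n col x y)) (Finset.Icc 1 (x-1)) = Finset.Icc 1 (x-1) := by
      rw [Finset.image_congr (g := id) (fun u hu => hpt1 u hu)]
      exact Finset.image_id
    have him2 : Finset.image (⇑(vAt m n col x y)) (Finset.Icc (x+c) y) = Finset.Icc x m := by
      rw [Finset.image_congr (g := fun u => u - c) (fun u hu => hpt2 u hu)]
      ext v
      simp only [Finset.mem_image, Finset.mem_Icc]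
      constructor
      · rintro ⟨u, hu, rfl⟩
        omega
      · intro hv
        exact ⟨v + c, by omega, by omega⟩
    rw [Finset.image_union, him1, him2]
    rw [show Finset.Icc 1 0 = (∅ : Finset ℕ) from Finset.Icc_eq_empty (by omega)]
    rw [Finset.image_empty, Finset.image_empty, Finset.sdiff_empty, Finset.union_empty]
    ext u
    simp only [Finset.mem_union, Finset.mem_Icc]
    omega
  | succ t ih =>
    intro x y X Y hx1 hxm1 hmy hyn hXm hfirst hmono hdom0 hdom hterm
    obtain ⟨hX1m, hY1m, hwhite⟩ := hXm 1 (le_refl 1) (by omega)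
    obtain ⟨hxX1, hY1y⟩ := hfirst (by omega)
    have hym : m + 1 ≤ y := by omega
    set c := y - m with hc
    set c' := Y 1 - m with hc'
    set c'' := c' - 1 with hc''
    have hc1 : 1 ≤ c := by omega
    have hc'1 : 1 ≤ c' := by omega
    have hcc : c' ≤ c := by omega
    have hcn : c ≤ n := by omega
    have hyc : y = m + c := by omega
    have hY1c : Y 1 = m + c' := by omega
    set q : ℕ → ℕ → Bool :=
      fun a j => col (a, m+1+j) && decide (x ≤ a) && decide (m+1+j ≤ y) with hq_def
    set g : ℕ → Equiv.Perm ℕ := fun a => fword a (q a) n with hg_def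
    have hveq : vAt m n col x y = prodR g 1 m := readingWord_eq m n _
    have hblackrow : ∀ a j, x ≤ a → a < X 1 → j < c → col (a, m+1+j) = true := by
      intro a j h1 h2 hj
      by_contra hw
      have hw' : col (a, m+1+j) = false := by revert hw; cases col (a, m+1+j) <;> simp
      have := hdom0 a (m+1+j) h1 (by omega) (by omega) (by omega) hw'
      omega
    have hblackcol : ∀ a j, X 1 ≤ a → a ≤ m → c' ≤ j → j < c → col (a, m+1+j) = true := by
      intro a j h1 h2 hj1 hj2
      by_contra hw
      have hw' : col (a, m+1+j) = false := by revert hw; cases col (a, m+1+j) <;> simp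
      have := hdom0 a (m+1+j) (by omega) h2 (by omega) (by omega) hw'
      omega
    have htrimq : ∀ a, fword a (q a) n = fword a (q a) c := by
      intro a
      apply fword_trim hcn
      intro j hj1 hj2
      have h3 : ¬ (m+1+j ≤ y) := by omega
      simp [hq_def, h3]
    have hs1 := prodR_split g 1 (m+1-x) (x-1)
    rw [show (m+1-x)+(x-1) = m from by omega, show 1 + (x-1) = x from by omega] at hs1
    have hbot : prodR g 1 (x-1) = 1 := by
      apply prodR_one
      intro a h1 h2
      show fword a (q a) n = 1
      rw [fword_trim (c := 0) (by omega) (fun j hj1 hj2 => by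
        have h3 : ¬ (x ≤ a) := by omega
        simp [hq_def, h3])]
      rfl
    have hs2 := prodR_split g x (m+1-X 1) (X 1 - x)
    rw [show (m+1-X 1)+(X 1-x) = m+1-x from by omega,
      show x + (X 1-x) = X 1 from by omega] at hs2
    have hs3 := prodR_split g (X 1) (m - X 1) 1
    rw [show (m - X 1)+1 = m+1-X 1 from by omega, prodR_single] at hs3
    set W : ℕ → Equiv.Perm ℕ := fun a => fword a (q a) c'' with hW_def
    set H : ℕ → Equiv.Perm ℕ :=
      fun a => fword (a + c'') (fun j => q a (j + c'')) (c - c'') with hH_def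
    have hrowsplit : ∀ a, X 1 + 1 ≤ a → a < X 1 + 1 + (m - X 1) → g a = W a * H a := by
      intro a h1 h2
      show fword a (q a) n = _
      rw [htrimq a, fword_split (q a) (show c'' ≤ c from by omega)]
    have htop : prodR g (X 1 + 1) (m - X 1)
        = prodR W (X 1 + 1) (m - X 1) * prodR H (X 1 + 1) (m - X 1) := by
      rw [prodR_congr (g' := fun a => W a * H a) hrowsplit]
      exact prodR_mul (fun a a' ha1 ha2 ha3 =>
        (fword_commute (q a') (fun j => q a (j + c''))
          (show a' + c'' < a + c'' from by omega)).symm)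
    set qi : ℕ → ℕ → Bool :=
      fun a j => col (a, m+1+j) && decide (X 1 + 1 ≤ a) && decide (m+1+j ≤ Y 1 - 1) with hqi_def
    set gi : ℕ → Equiv.Perm ℕ := fun a => fword a (qi a) n with hgi_def
    have hvineq : vAt m n col (X 1 + 1) (Y 1 - 1) = prodR gi 1 m := readingWord_eq m n _
    have hsi := prodR_split gi 1 (m - X 1) (X 1)
    rw [show (m - X 1)+(X 1) = m from by omega, show 1 + X 1 = X 1 + 1 from by omega] at hsi
    have hiboti : prodR gi 1 (X 1) = 1 := by
      apply prodR_one
      intro a h1 h2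
      show fword a (qi a) n = 1
      rw [fword_trim (c := 0) (by omega) (fun j hj1 hj2 => by
        have h3 : ¬ (X 1 + 1 ≤ a) := by omega
        simp [hqi_def, h3]
        intro _ h4; omega)]
      rfl
    have hicongr : prodR gi (X 1 + 1) (m - X 1) = prodR W (X 1 + 1) (m - X 1) := by
      apply prodR_congr
      intro a h1 h2
      show fword a (qi a) n = fword a (q a) c''
      rw [fword_trim (c := c'') (by omega) (fun j hj1 hj2 => by
        have h3 : ¬ (m+1+j ≤ Y 1 - 1) := by omega
        simp [hqi_def, h3])]
      apply fword_congr
      intro j hj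
      have e1 : X 1 + 1 ≤ a := h1
      have e2 : m + 1 + j ≤ Y 1 - 1 := by omega
      have e3 : x ≤ a := by omega
      have e4 : m + 1 + j ≤ y := by omega
      simp [hqi_def, hq_def, e1, e2, e3, e4]
      intro _; omega
    have hvin : vAt m n col (X 1 + 1) (Y 1 - 1) = prodR W (X 1 + 1) (m - X 1) := by
      rw [hvineq, hsi, hiboti, mul_one, hicongr]
    set γ : ℕ → Bool := fun a => q a c'' with hγ_def
    have hLpos : 1 ≤ c - c'' := by omega
    have hride0 : ∀ a1, prodR H (a1 + 1) (m - a1) (a1 + 1 + c'')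
        = runEnd γ a1 (m - a1) + 1 + c'' :=
      fun a1 => prodR_ride hLpos γ (fun a j => q a (j + c''))
        (fun a => by show q a (0 + c'') = q a c''; rw [Nat.zero_add]) (m - a1) a1
    have hride : prodR H (X 1 + 1) (m - X 1) (X 1 + c')
        = runEnd γ (X 1) (m - X 1) + c' := by
      rw [show X 1 + c' = X 1 + 1 + c'' from by omega, hride0 (X 1)]
      omega
    have hdive : ∀ u, X 1 + c + 1 ≤ u → u ≤ y →
        prodR H (X 1 + 1) (m - X 1) u
          = if γ (u - c) then (u - c) + c'' else runEnd γ (u - c) (m - (u - c)) + c' := by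
      intro u hu1 hu2
      have ha1 : X 1 + 1 ≤ u - c := by omega
      have ha2 : u - c ≤ m := by omega
      have hsp := prodR_split H (X 1 + 1) (m + 1 - (u - c)) ((u - c) - (X 1 + 1))
      rw [show (m + 1 - (u - c)) + ((u - c) - (X 1 + 1)) = m - X 1 from by omega,
        show (X 1 + 1) + ((u - c) - (X 1 + 1)) = u - c from by omega] at hsp
      rw [hsp, Equiv.Perm.mul_apply]
      have hlow : prodR H (X 1 + 1) ((u - c) - (X 1 + 1)) u = u := by
        apply prodR_fix_high (off := c)
        · intro a h1 h2 v hv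
          show fword (a + c'') (fun j => q a (j + c'')) (c - c'') v = v
          exact fword_gt _ (by omega)
        · omega
      rw [hlow]
      have hsp2 := prodR_split H (u - c) (m - (u - c)) 1
      rw [show (m - (u - c)) + 1 = m + 1 - (u - c) from by omega, prodR_single] at hsp2
      rw [hsp2, Equiv.Perm.mul_apply]
      have hbd : H (u - c) u = if γ (u - c) then (u - c) + c'' else (u - c) + c' := by
        have hhs := fword_hookstep (k0 := (u-c)+c'') (q := fun j => q (u-c) (j + c''))
          (len := c - c'') hLpos (fun j hj1 hj2 => by
          show q (u-c) (j + c'') = true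
          have hb : col (u - c, m + 1 + (j + c'')) = true :=
            hblackcol (u - c) (j + c'') (by omega) ha2 (by omega) (by omega)
          have e3 : x ≤ u - c := by omega
          have e4 : m + 1 + (j + c'') ≤ y := by omega
          simp [hq_def, hb, e3, e4])
        rw [show (u - c) + c'' + (c - c'') = u from by omega] at hhs
        rw [show q (u - c) (0 + c'') = q (u-c) c'' from by
          show q (u-c) (0 + c'') = q (u-c) c''
          rw [Nat.zero_add]] at hhs
        rw [show (u - c) + c'' + 1 = (u - c) + c' from by omega] at hhs
        exact hhs
      rw [hbd]
      by_cases hγv : γ (u - c) = true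
      · rw [if_pos hγv, if_pos hγv]
        exact prodR_fix_low (off := c'')
          (fun a h1 h2 v hv => fword_lt _ (by omega)) (by omega)
      · rw [if_neg hγv, if_neg hγv]
        rw [show (u-c) + c' = (u-c) + 1 + c'' from by omega, hride0 (u - c)]
        omega
    have hRX1b : g (X 1) (X 1 + c) = X 1 + c' := by
      show fword (X 1) (q (X 1)) n (X 1 + c) = X 1 + c'
      rw [htrimq (X 1)]
      rw [fword_slide (j0 := c') hcc (fun j hj1 hj2 => by
        have hb : col (X 1, m+1+j) = true := hblackcol (X 1) j (le_refl _) hX1m hj1 hj2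
        have e4 : m + 1 + j ≤ y := by omega
        simp [hq_def, hb, hxX1, e4])]
      rw [show c' = c'' + 1 from by omega, fword_succ_apply]
      have hqw : q (X 1) c'' = false := by
        have e5 : m + 1 + c'' = Y 1 := by omega
        simp [hq_def, e5, hwhite]
      rw [hqw, swapIf_false]
      simp only [Equiv.Perm.one_apply]
      exact fword_gt _ (by omega)
    have hgX1lt : ∀ v, v < X 1 → g (X 1) v = v := fun v hv => fword_lt _ hv
    have hgX1gt : ∀ v, X 1 + c < v → g (X 1) v = v := by
      intro v hv
      show fword (X 1) (q (X 1)) n v = v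
      rw [htrimq (X 1)]
      exact fword_gt _ hv
    have hqB : ∀ a, x ≤ a → a < x + (X 1 - x) →
        (∀ j, j < c → q a j = true) ∧ (∀ j, c ≤ j → j < n → q a j = false) := by
      intro a ha1 ha2
      constructor
      · intro j hj
        have h1 : col (a, m+1+j) = true := hblackrow a j ha1 (by omega) hj
        have h3 : m+1+j ≤ y := by omega
        simp [hq_def, h1, ha1, h3]
      · intro j hj1 hj2
        have h3 : ¬ (m+1+j ≤ y) := by omega
        simp [hq_def, h3]
    have hB : ∀ u, x + c ≤ u →
        prodR g x (X 1 - x) u = if u < X 1 + c then u - c else u := by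
      intro u hu
      rw [hg_def]
      rw [prodR_black hcn hqB hu, show x + (X 1 - x) + c = X 1 + c from by omega]
    have hv2 : ∀ u, vAt m n col x y u
        = prodR W (X 1+1) (m - X 1)
            (prodR H (X 1+1) (m - X 1) (g (X 1) (prodR g x (X 1 - x) u))) := by
      intro u
      rw [hveq, hs1, hbot, mul_one, hs2, hs3, htop]
      simp only [Equiv.Perm.mul_apply]
    have hSsplit : Finset.Icc (x+c) y
        = (Finset.Icc (x+c) (X 1 - 1 + c) ∪ {X 1 + c}) ∪ Finset.Icc (X 1 + c + 1) y := by
      ext u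
      simp only [Finset.mem_union, Finset.mem_Icc, Finset.mem_singleton]
      omega
    set E := prodR W (X 1 + 1) (m - X 1) with hE_def
    have hpt1 : ∀ u ∈ Finset.Icc 1 (x-1), vAt m n col x y u = u := by
      intro u hu
      rw [Finset.mem_Icc] at hu
      rw [hv2]
      have e1 : prodR g x (X 1 - x) u = u :=
        prodR_fix_low (off := 0) (fun a h1 h2 v hv => fword_lt _ (by omega)) (by omega)
      rw [e1, hgX1lt u (by omega)]
      have e2 : prodR H (X 1 + 1) (m - X 1) u = u :=
        prodR_fix_low (off := c'') (fun a h1 h2 v hv => fword_lt _ (by omega)) (by omega)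
      rw [e2]
      exact prodR_fix_low (off := 0) (fun a h1 h2 v hv => fword_lt _ (by omega)) (by omega)
    have hpt2 : ∀ u ∈ Finset.Icc (x+c) (X 1 - 1 + c), vAt m n col x y u = u - c := by
      intro u hu
      rw [Finset.mem_Icc] at hu
      rw [hv2]
      have e1 : prodR g x (X 1 - x) u = u - c := by
        rw [hB u (by omega), if_pos (by omega)]
      rw [e1, hgX1lt (u - c) (by omega)]
      have e2 : prodR H (X 1 + 1) (m - X 1) (u - c) = u - c :=
        prodR_fix_low (off := c'') (fun a h1 h2 v hv => fword_lt _ (by omega)) (by omega)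
      rw [e2]
      exact prodR_fix_low (off := 0) (fun a h1 h2 v hv => fword_lt _ (by omega)) (by omega)
    have hpt3 : vAt m n col x y (X 1 + c) = E (runEnd γ (X 1) (m - X 1) + c') := by
      rw [hv2]
      have e1 : prodR g x (X 1 - x) (X 1 + c) = X 1 + c := by
        rw [hB _ (by omega), if_neg (by omega)]
      rw [e1, hRX1b, hride]
    have hpt4 : ∀ u ∈ Finset.Icc (X 1 + c + 1) y, vAt m n col x y u
        = E (if γ (u - c) then (u - c) + c''
            else runEnd γ (u - c) (m - (u - c)) + c') := by
      intro u hu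
      rw [Finset.mem_Icc] at hu
      rw [hv2]
      have e1 : prodR g x (X 1 - x) u = u := by
        rw [hB u (by omega), if_neg (by omega)]
      rw [e1, hgX1gt u (by omega), hdive u (by omega) (by omega)]
    have him1 : Finset.image (⇑(vAt m n col x y)) (Finset.Icc 1 (x-1))
        = Finset.Icc 1 (x-1) := by
      rw [Finset.image_congr (g := id) (fun u hu => hpt1 u hu)]
      exact Finset.image_id
    have him2 : Finset.image (⇑(vAt m n col x y)) (Finset.Icc (x+c) (X 1 - 1 + c))
        = Finset.Icc x (X 1 - 1) := by
      rw [Finset.image_congr (g := fun u => u - c) (fun u hu => hpt2 u hu)]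
      ext v
      simp only [Finset.mem_image, Finset.mem_Icc]
      constructor
      · rintro ⟨u, hu, rfl⟩
        omega
      · intro hv
        exact ⟨v + c, by omega, by omega⟩
    have him3 : Finset.image (⇑(vAt m n col x y)) {X 1 + c}
        = {E (runEnd γ (X 1) (m - X 1) + c')} := by
      rw [Finset.image_singleton, hpt3]
    have him4 : Finset.image (⇑(vAt m n col x y)) (Finset.Icc (X 1 + c + 1) y)
        = Finset.image (⇑E) (Finset.image (fun u => if γ (u - c) then (u - c) + c''
            else runEnd γ (u - c) (m - (u - c)) + c') (Finset.Icc (X 1 + c + 1) y)) := by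
      rw [Finset.image_image]
      exact Finset.image_congr (fun u hu => hpt4 u hu)
    have hdset : insert (runEnd γ (X 1) (m - X 1) + c')
        (Finset.image (fun u => if γ (u - c) then (u - c) + c''
            else runEnd γ (u - c) (m - (u - c)) + c') (Finset.Icc (X 1 + c + 1) y))
        = Finset.Icc (X 1 + c') (Y 1) := by
      have h1 : Finset.Icc (X 1 + c + 1) y
          = Finset.image (fun a => a + c) (Finset.Icc (X 1 + 1) m) := by
        ext u
        simp only [Finset.mem_image, Finset.mem_Icc]
        constructor
        · intro hu
          exact ⟨u - c, by omega, by omega⟩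
        · rintro ⟨a, ha, rfl⟩
          omega
      rw [h1, Finset.image_image]
      have h2 : Finset.image ((fun u => if γ (u - c) then (u - c) + c''
            else runEnd γ (u - c) (m - (u - c)) + c') ∘ (fun a => a + c)) (Finset.Icc (X 1 + 1) m)
          = Finset.image (fun a => (if γ a then a - 1 else runEnd γ a (m - a)) + c')
              (Finset.Icc (X 1 + 1) m) := by
        apply Finset.image_congr
        intro a ha
        rw [Finset.mem_coe, Finset.mem_Icc] at ha
        show (if γ (a + c - c) = true then (a + c - c) + c''
            else runEnd γ (a + c - c) (m - (a + c - c)) + c')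
          = (if γ a = true then a - 1 else runEnd γ a (m - a)) + c'
        rw [show a + c - c = a from by omega]
        by_cases hγa : γ a = true
        · rw [if_pos hγa, if_pos hγa]
          omega
        · rw [if_neg hγa, if_neg hγa]
      rw [h2]
      have h4 := runIdentity γ m (m - X 1) (X 1) (by omega)
      have h5 := congrArg (Finset.image (fun b => b + c')) h4
      rw [Finset.image_insert, Finset.image_image] at h5
      have h6 : Finset.image (fun b => b + c') (Finset.Icc (X 1) m)
          = Finset.Icc (X 1 + c') (Y 1) := by
        ext v
        simp only [Finset.mem_image, Finset.mem_Icc]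
        constructor
        · rintro ⟨b, hb, rfl⟩
          omega
        · intro hv
          exact ⟨v - c', by omega, by omega⟩
      rw [h6] at h5
      exact h5
    have hEfix : ∀ v, v ≤ X 1 → E v = v := by
      intro v hv
      exact prodR_fix_low (off := 0) (fun a h1 h2 w hw => fword_lt _ (by omega)) (by omega)
    have hEY1 : E (Y 1) = Y 1 := by
      apply prodR_fix_high (off := c'')
      · intro a h1 h2 v hv
        exact fword_gt _ (by omega)
      · omega
    -- apply the induction hypothesis to the inner region
    have hXm' : ∀ i, 1 ≤ i → i ≤ t →
        X (i+1) ≤ m ∧ m+1 ≤ Y (i+1) ∧ col (X (i+1), Y (i+1)) = false :=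
      fun i h1 h2 => hXm (i+1) (by omega) (by omega)
    have hfirst' : 1 ≤ t → X 1 + 1 ≤ X (1+1) ∧ Y (1+1) ≤ Y 1 - 1 := by
      intro ht
      have := hmono 1 (le_refl _) (by omega)
      omega
    have hmono' : ∀ i, 1 ≤ i → i < t → X (i+1) < X (i+1+1) ∧ Y (i+1+1) < Y (i+1) :=
      fun i h1 h2 => hmono (i+1) (by omega) (by omega)
    have hdom0' : ∀ a b, X 1 + 1 ≤ a → a ≤ m → m+1 ≤ b → b ≤ Y 1 - 1 → col (a,b) = false →
        1 ≤ t ∧ X (1+1) ≤ a ∧ b ≤ Y (1+1) := by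
      intro a b h1 h2 h3 h4 hw
      rcases Nat.eq_zero_or_pos t with ht0 | ht0
      · subst ht0
        simp only [Nat.zero_add] at hterm
        exact absurd (hterm (le_refl _) a b (by omega) h2 h3 (by omega) hw) (fun h => h)
      · exact ⟨ht0, hdom 1 (le_refl _) (by omega) a b (by omega) h2 h3 (by omega) hw⟩
    have hdom' : ∀ i, 1 ≤ i → i < t → ∀ a b, X (i+1) < a → a ≤ m → m+1 ≤ b → b < Y (i+1) →
        col (a,b) = false → X (i+1+1) ≤ a ∧ b ≤ Y (i+1+1) :=
      fun i h1 h2 => hdom (i+1) (by omega) (by omega)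
    have hterm' : 1 ≤ t → ∀ a b, X (t+1) < a → a ≤ m → m+1 ≤ b → b < Y (t+1) →
        col (a,b) = false → False :=
      fun h1 => hterm (by omega)
    have hIH := ih (X 1 + 1) (Y 1 - 1) (fun i => X (i+1)) (fun i => Y (i+1))
      (by omega) (by omega) (by omega) (by omega) hXm' hfirst' hmono' hdom0' hdom' hterm'
    rw [show X 1 + 1 - 1 = X 1 from by omega,
      show (X 1 + 1) + ((Y 1 - 1) - m) = X 1 + c' from by omega, hvin,
      Finset.image_union] at hIH
    have hEfixIcc : Finset.image (⇑E) (Finset.Icc 1 (X 1)) = Finset.Icc 1 (X 1) := by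
      rw [Finset.image_congr (g := id) (fun u hu => hEfix u (by
        rw [Finset.mem_coe, Finset.mem_Icc] at hu
        omega))]
      exact Finset.image_id
    rw [hEfixIcc] at hIH
    -- bounds on the pieces
    have hDsub : ∀ v, v ∈ Finset.image (⇑E) (Finset.Icc (X 1 + c') (Y 1 - 1)) →
        X 1 + 1 ≤ v ∧ v ≤ Y 1 - 1 := by
      intro v hv
      rw [Finset.mem_image] at hv
      obtain ⟨u, hu, rfl⟩ := hv
      rw [Finset.mem_Icc] at hu
      refine prodR_maps (A := X 1 + 1) (B := Y 1 - 1) ?_ (by omega) (by omega)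
      intro a h1 h2 v hv1 hv2
      rcases Nat.lt_or_ge v a with hva | hva
      · have hfix : W a v = v := fword_lt _ hva
        rw [hfix]
        omega
      · rcases le_or_gt v (a + c'') with hvb | hvb
        · have hm := fword_mem (q a) hva hvb
          have he : W a v = fword a (q a) c'' v := rfl
          rw [he]
          omega
        · have hfix : W a v = v := fword_gt _ hvb
          rw [hfix]
          omega
    have hchain2 : ∀ i, 1 ≤ i → i ≤ t → X 1 < X (i+1) ∧ Y (i+1) < Y 1 := by
      intro i
      induction i with
      | zero => intro h; exact absurd h (by omega)
      | succ i ihi =>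
        intro h1 h2
        rcases Nat.eq_zero_or_pos i with h0 | h0
        · subst h0
          exact hmono 1 (le_refl _) (by omega)
        · have hprev := ihi (by omega) (by omega)
          have hstep := hmono (i+1) (by omega) (by omega)
          constructor <;> omega
    have hXbound : ∀ v, v ∈ Finset.image (fun i => X (i+1)) (Finset.Icc 1 t) →
        X 1 < v ∧ v ≤ m := by
      intro v hv
      rw [Finset.mem_image] at hv
      obtain ⟨i, hi, rfl⟩ := hv
      rw [Finset.mem_Icc] at hi
      exact ⟨(hchain2 i hi.1 hi.2).1, (hXm (i+1) (by omega) (by omega)).1⟩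
    have hYbound : ∀ v, v ∈ Finset.image (fun i => Y (i+1)) (Finset.Icc 1 t) →
        m + 1 ≤ v ∧ v < Y 1 := by
      intro v hv
      rw [Finset.mem_image] at hv
      obtain ⟨i, hi, rfl⟩ := hv
      rw [Finset.mem_Icc] at hi
      exact ⟨(hXm (i+1) (by omega) (by omega)).2.1, (hchain2 i hi.1 hi.2).2⟩
    -- assemble the image
    have hsplitIcc : Finset.Icc (X 1 + c') (Y 1)
        = insert (Y 1) (Finset.Icc (X 1 + c') (Y 1 - 1)) := by
      ext v
      simp only [Finset.mem_Icc, Finset.mem_insert]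
      omega
    have htotal : Finset.image (⇑(vAt m n col x y))
          (Finset.Icc 1 (x-1) ∪ Finset.Icc (x+c) y)
        = Finset.Icc 1 (x-1) ∪ (Finset.Icc x (X 1 - 1)
            ∪ insert (Y 1) (Finset.image (⇑E) (Finset.Icc (X 1 + c') (Y 1 - 1)))) := by
      rw [hSsplit, Finset.image_union, Finset.image_union, Finset.image_union,
        him1, him2, him3, him4, Finset.union_assoc (Finset.Icc x (X 1 - 1))]
      congr 1
      congr 1
      rw [← Finset.insert_eq, ← Finset.image_insert, hdset, hsplitIcc,
        Finset.image_insert, hEY1]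
    rw [htotal, image_Icc_succ X t, image_Icc_succ Y t]
    ext u
    have e1 := Finset.ext_iff.mp hIH u
    simp only [Finset.mem_union, Finset.mem_insert, Finset.mem_sdiff, Finset.mem_Icc,
      Finset.mem_singleton] at e1 ⊢
    have f1 := hDsub u
    have f2 := hXbound u
    have f3 := hYbound u
    by_cases h1 : u ∈ Finset.image (⇑E) (Finset.Icc (X 1 + c') (Y 1 - 1)) <;>
      by_cases h2 : u ∈ Finset.image (fun i => X (i+1)) (Finset.Icc 1 t) <;>
      by_cases h3 : u ∈ Finset.image (fun i => Y (i+1)) (Finset.Icc 1 t) <;>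
      simp only [h1, h2, h3, true_iff, iff_true, false_iff, iff_false, not_true,
        not_false_iff, true_or, or_true, false_or, or_false, true_and, and_true,
        false_and, and_false, true_implies, false_implies] at e1 f1 f2 f3 ⊢ <;>
      omega



end ChainAux

/-- For an `m × n` Cauchon diagram `col`, any grid square `(x,y)`, and the chain
`(X 1, Y 1), ..., (X t, Y t)` rooted at `(x,y)`, the image of `{1,...,m}` under
`v_{x,y} ∘ w_{x,y}⁻¹` is `({1,...,m} \ {X 1,...,X t}) ∪ {Y 1,...,Y t}`. -/

lemma ChainAux.vAt_true_eq_wAt (m n x y : ℕ) : vAt m n (fun _ => true) x y = wAt m n x y := rfl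


open ChainAux in
theorem image_vAt_wAt_inv_eq_chain
    (m n : ℕ) (hm : 2 ≤ m) (hn : 2 ≤ n)
    (col : ℕ × ℕ → Bool) (hC : IsCauchon m n col)
    (x y : ℕ) (hxy : InGrid m n (x, y))
    (t : ℕ) (X Y : ℕ → ℕ)
    (hchain : IsChainRootedAt m n col x y t X Y) :
    Finset.image (fun j => vAt m n col x y ((wAt m n x y)⁻¹ j)) (Finset.Icc 1 m) =
      (Finset.Icc 1 m \ Finset.image X (Finset.Icc 1 t)) ∪
        Finset.image Y (Finset.Icc 1 t) := by
  obtain ⟨h1, h2, h3, h4, h5, h6⟩ := hchain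
  obtain ⟨hx1, hxm, hy1, hyn⟩ := hxy
  have hXm : ∀ i, 1 ≤ i → i ≤ t → X i ≤ m ∧ m + 1 ≤ Y i ∧ col (X i, Y i) = false := by
    intro i hi1 hi2
    obtain ⟨hg, hw⟩ := h1 i hi1 hi2
    exact ⟨hg.2.1, hg.2.2.1, hw⟩
  have hfirst : 1 ≤ t → x ≤ X 1 ∧ Y 1 ≤ y := by
    intro ht
    cases hcol : col (x, y)
    · obtain ⟨_, hX, hY⟩ := h2 hcol
      omega
    · obtain ⟨hx', hy', _⟩ := h3 hcol ht
      exact ⟨hx', hy'⟩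
  have hmono : ∀ i, 1 ≤ i → i < t → X i < X (i+1) ∧ Y (i+1) < Y i := by
    intro i hi1 hi2
    obtain ⟨ha, hb, _⟩ := h5 i hi1 hi2
    exact ⟨ha, hb⟩
  have hdom0 : ∀ a b, x ≤ a → a ≤ m → m+1 ≤ b → b ≤ y → col (a,b) = false →
      1 ≤ t ∧ X 1 ≤ a ∧ b ≤ Y 1 := by
    intro a b ha1 ha2 hb1 hb2 hw
    have hgrid : InGrid m n (a, b) :=
      ⟨show 1 ≤ a by omega, ha2, hb1, show b ≤ m + n by omega⟩
    cases hcol : col (x, y)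
    · obtain ⟨ht, hX, hY⟩ := h2 hcol
      exact ⟨ht, by omega, by omega⟩
    · rcases Nat.eq_zero_or_pos t with ht | ht
      · exact absurd (h4 ht a b hgrid hw ha1 hb2) (fun h => h)
      · obtain ⟨_, _, hdomf⟩ := h3 hcol ht
        exact ⟨ht, hdomf a b hgrid hw ha1 hb2⟩
  have hdom : ∀ i, 1 ≤ i → i < t → ∀ a b, X i < a → a ≤ m → m+1 ≤ b → b < Y i →
      col (a,b) = false → X (i+1) ≤ a ∧ b ≤ Y (i+1) := by
    intro i hi1 hi2 a b ha1 ha2 hb1 hb2 hw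
    have hgridi := (h1 i hi1 (by omega)).1
    have hgrid : InGrid m n (a, b) :=
      ⟨show 1 ≤ a by omega, ha2, hb1, show b ≤ m + n by
        have := hgridi.2.2.2
        omega⟩
    exact (h5 i hi1 hi2).2.2 a b hgrid hw ha1 hb2
  have hterm : 1 ≤ t → ∀ a b, X t < a → a ≤ m → m+1 ≤ b → b < Y t →
      col (a,b) = false → False := by
    intro ht a b ha1 ha2 hb1 hb2 hw
    have hgridt := (h1 t ht (le_refl t)).1
    have hgrid : InGrid m n (a, b) :=
      ⟨show 1 ≤ a by omega, ha2, hb1, show b ≤ m + n by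
        have := hgridt.2.2.2
        omega⟩
    exact h6 ht a b hgrid hw ha1 hb2
  have hSw : Finset.image (⇑(wAt m n x y))
      (Finset.Icc 1 (x-1) ∪ Finset.Icc (x + (y-m)) y) = Finset.Icc 1 m := by
    have hb := core m n (fun _ => true) 0 x y (fun _ => 0) (fun _ => 0)
      (by omega) (by omega) (by omega) (by omega)
      (fun i hi1 hi2 => absurd hi2 (by omega))
      (fun ht => absurd ht (by omega))
      (fun i hi1 hi2 => absurd hi2 (by omega))
      (fun a b _ _ _ _ hw => by simp at hw)
      (fun i hi1 hi2 => absurd hi2 (by omega))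
      (fun ht => absurd ht (by omega))
    rw [vAt_true_eq_wAt] at hb
    rw [show Finset.Icc 1 0 = (∅ : Finset ℕ) from Finset.Icc_eq_empty (by omega),
      Finset.image_empty, Finset.sdiff_empty, Finset.union_empty] at hb
    exact hb
  have hmain : Finset.image (fun j => vAt m n col x y ((wAt m n x y)⁻¹ j)) (Finset.Icc 1 m)
      = Finset.image (⇑(vAt m n col x y))
          (Finset.Icc 1 (x-1) ∪ Finset.Icc (x + (y-m)) y) := by
    conv_lhs => rw [← hSw]
    rw [Finset.image_image]
    apply Finset.image_congr
    intro u hu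
    show vAt m n col x y ((wAt m n x y)⁻¹ (wAt m n x y u)) = vAt m n col x y u
    rw [show (wAt m n x y)⁻¹ (wAt m n x y u) = u from Equiv.symm_apply_apply _ _]
  rw [hmain]
  exact core m n col t x y X Y (by omega) (by omega) (by omega) (by omega)
    hXm hfirst hmono hdom0 hdom hterm
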